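/- Suppose V = V_1 ⊔ … ⊔ V_k is a partition into nonempty sets such that whenever i ≠ j, every vertex of V_i is adjacent in G to every vertex of V_j. Then for x ∈ [0,1]^V, x ∈ R(G) if and only if 𝕶_{G,V'}(x) > 0 for every j ∈ {1,…,k} and every subset V' ⊆ V_j; that is, R(G) is the product of the corresponding regions for the induced subgraphs on V_1, …, V_k. (Lemma 4.7, second claim.) -/

import Mathlib

open scoped Classical ENNReal

set_option linter.unusedSectionVars false

variable {V : Type*} [Fintype V] [DecidableEq V]

/-- An admissible swap exchanges two consecutive letters that are adjacent in `G`. -/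
def AdjSwap (G : SimpleGraph V) (w w' : List V) : Prop :=
  ∃ (a b : List V) (u v : V), G.Adj u v ∧ w = a ++ u :: v :: b ∧ w' = a ++ v :: u :: b

/-- Two words are equivalent if one can be transformed into the other by finitely many
admissible swaps. -/
def WordEquiv (G : SimpleGraph V) : List V → List V → Prop :=
  Relation.ReflTransGen (AdjSwap G)

lemma adjSwap_symm (G : SimpleGraph V) : Symmetric (AdjSwap G) := by
  rintro w w' ⟨a, b, u, v, h, rfl, rfl⟩
  exact ⟨a, b, v, u, h.symm, rfl, rfl⟩

/-- The setoid of words modulo admissible swaps. -/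
def wordSetoid (G : SimpleGraph V) : Setoid (List V) where
  r := WordEquiv G
  iseqv := ⟨fun _ => Relation.ReflTransGen.refl,
    fun h => by
      change Relation.ReflTransGen (AdjSwap G) _ _ at h ⊢
      induction h with
      | refl => exact Relation.ReflTransGen.refl
      | tail _ hbc ih => exact Relation.ReflTransGen.head (adjSwap_symm G hbc) ih,
    fun h h' => Relation.ReflTransGen.trans h h'⟩

/-- A word is `G`-reduced if between any two equal letters there is a letter distinct from
them and not adjacent to them. -/
def IsGReduced (G : SimpleGraph V) (w : List V) : Prop :=
  ∀ i j : Fin w.length, i < j → w.get i = w.get j →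
    ∃ k : Fin w.length, i < k ∧ k < j ∧ w.get k ≠ w.get i ∧ ¬ G.Adj (w.get k) (w.get i)

/-- The product `x_{w_1} ⋯ x_{w_ℓ}` depends only on the equivalence class of a word. -/
noncomputable def classProd (G : SimpleGraph V) (x : V → ℝ≥0∞) :
    Quotient (wordSetoid G) → ℝ≥0∞ :=
  Quotient.lift (fun w : List V => (w.map x).prod) (by
    intro a b h
    induction h with
    | refl => rfl
    | tail _ hs ih =>
        obtain ⟨a', b', u, v, huv, rfl, rfl⟩ := hs
        rw [ih]
        simp only [List.map_append, List.prod_append, List.map_cons, List.prod_cons]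
        ring)

/-- `tildeF G x` : the sum over all equivalence classes of words of `∏ x_{w_i}`,
valued in `[0,∞]`. -/
noncomputable def tildeF (G : SimpleGraph V) (x : V → ℝ) : ℝ≥0∞ :=
  ∑' c : Quotient (wordSetoid G), classProd G (fun v => ENNReal.ofReal (x v)) c

/-- `redF G x` : the sum over all equivalence classes of `G`-reduced words of `∏ x_{w_i}`,
valued in `[0,∞]`. -/
noncomputable def redF (G : SimpleGraph V) (x : V → ℝ) : ℝ≥0∞ :=
  ∑' c : {c : Quotient (wordSetoid G) // ∃ w, IsGReduced G w ∧ Quotient.mk (wordSetoid G) w = c},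
    classProd G (fun v => ENNReal.ofReal (x v)) c.1

/-- The clique polynomial `𝕶_{G,V'}(x) = ∑_{cliques K ⊆ V'} (-1)^{|K|} ∏_{v ∈ K} x_v`. -/
noncomputable def cliquePoly (G : SimpleGraph V) (V' : Finset V) (x : V → ℝ) : ℝ :=
  ∑ K ∈ V'.powerset.filter (fun K : Finset V => G.IsClique (K : Set V)),
    (-1 : ℝ) ^ K.card * ∏ v ∈ K, x v

/-- The Euclidean norm on `ℝ^V`. -/
noncomputable def eucNorm (x : V → ℝ) : ℝ := Real.sqrt (∑ v, x v ^ 2)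

/-- `min_{V' ⊆ V} 𝕶_{G,V'}(x)`. -/
noncomputable def minK (G : SimpleGraph V) (x : V → ℝ) : ℝ :=
  Finset.univ.inf' ⟨∅, Finset.mem_univ _⟩ fun V' : Finset V => cliquePoly G V' x

/-- `ρ(u) = inf {r ∈ [0,∞) : min_{V' ⊆ V} 𝕶_{G,V'}(r·u) = 0}`. -/
noncomputable def rho (G : SimpleGraph V) (u : V → ℝ) : ℝ :=
  sInf {r : ℝ | 0 ≤ r ∧ minK G (r • u) = 0}

/-- The region `R(G) = {x ∈ [0,1]^V : 𝕶_{G,V'}(x) > 0 for all V' ⊆ V}`. -/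
def regionR (G : SimpleGraph V) : Set (V → ℝ) :=
  {x | (∀ v, x v ∈ Set.Icc (0 : ℝ) 1) ∧ ∀ V' : Finset V, 0 < cliquePoly G V' x}


lemma cliquePoly_prod (G : SimpleGraph V) (k : ℕ) (Vs : Fin k → Finset V)
    (hdisj : ∀ i j, i ≠ j → Disjoint (Vs i) (Vs j))
    (hcover : ∀ v : V, ∃ j, v ∈ Vs j)
    (hadj : ∀ i j, i ≠ j → ∀ a ∈ Vs i, ∀ b ∈ Vs j, G.Adj a b)
    (x : V → ℝ) (V' : Finset V) :
    cliquePoly G V' x = ∏ j : Fin k, cliquePoly G (V' ∩ Vs j) x := by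
  unfold cliquePoly
  rw [Finset.prod_univ_sum]
  refine (Finset.sum_nbij' (fun p => Finset.univ.biUnion p)
    (fun K => fun j => K ∩ Vs j) ?_ ?_ ?_ ?_ ?_).symm
  · intro p hp
    rw [Fintype.mem_piFinset] at hp
    have hsub : ∀ j, p j ⊆ V' ∩ Vs j := fun j =>
      Finset.mem_powerset.1 (Finset.mem_filter.1 (hp j)).1
    have hcl : ∀ j, G.IsClique ((p j : Finset V) : Set V) := fun j =>
      (Finset.mem_filter.1 (hp j)).2
    rw [Finset.mem_filter, Finset.mem_powerset]
    constructor
    · intro v hv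
      obtain ⟨j, -, hvj⟩ := Finset.mem_biUnion.1 hv
      exact (Finset.mem_inter.1 (hsub j hvj)).1
    · intro u hu v hv huv
      simp only [Finset.coe_biUnion, Finset.coe_univ, Set.mem_iUnion,
        Finset.mem_coe, Set.mem_setOf_eq] at hu hv
      obtain ⟨i, -, hui⟩ := hu
      obtain ⟨j, -, hvj⟩ := hv
      rcases eq_or_ne i j with rfl | hij
      · exact hcl i hui hvj huv
      · exact hadj i j hij u ((Finset.mem_inter.1 (hsub i hui)).2) v
          ((Finset.mem_inter.1 (hsub j hvj)).2)
  · intro K hK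
    rw [Finset.mem_filter, Finset.mem_powerset] at hK
    rw [Fintype.mem_piFinset]
    intro j
    rw [Finset.mem_filter, Finset.mem_powerset]
    constructor
    · exact fun v hv => Finset.mem_inter.2
        ⟨hK.1 (Finset.mem_inter.1 hv).1, (Finset.mem_inter.1 hv).2⟩
    · exact hK.2.subset (by intro v hv; exact (Finset.mem_inter.1 hv).1)
  · intro p hp
    rw [Fintype.mem_piFinset] at hp
    have hsub : ∀ j, p j ⊆ V' ∩ Vs j := fun j =>
      Finset.mem_powerset.1 (Finset.mem_filter.1 (hp j)).1
    funext j
    ext v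
    simp only [Finset.mem_inter, Finset.mem_biUnion, Finset.mem_univ, true_and]
    constructor
    · rintro ⟨⟨i, hvi⟩, hvj⟩
      rcases eq_or_ne i j with rfl | hij
      · exact hvi
      · exact absurd hvj (Finset.disjoint_left.1 (hdisj i j hij)
          (Finset.mem_inter.1 (hsub i hvi)).2)
    · intro hv
      exact ⟨⟨j, hv⟩, (Finset.mem_inter.1 (hsub j hv)).2⟩
  · intro K hK
    ext v
    simp only [Finset.mem_biUnion, Finset.mem_univ, true_and, Finset.mem_inter]
    constructor
    · rintro ⟨j, hv, -⟩; exact hv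
    · intro hv
      obtain ⟨j, hj⟩ := hcover v
      exact ⟨j, hv, hj⟩
  · intro p hp
    rw [Fintype.mem_piFinset] at hp
    have hsub : ∀ j, p j ⊆ Vs j := fun j v hv =>
      (Finset.mem_inter.1 (Finset.mem_powerset.1 (Finset.mem_filter.1 (hp j)).1 hv)).2
    have hpd : ((Finset.univ : Finset (Fin k)) : Set (Fin k)).PairwiseDisjoint p := by
      intro i _ j _ hij
      exact Finset.disjoint_left.2 fun v hvi hvj =>
        Finset.disjoint_left.1 (hdisj i j hij) (hsub i hvi) (hsub j hvj)
    rw [Finset.card_biUnion (fun i _ j _ hij => hpd (Finset.mem_coe.2 (Finset.mem_univ i))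
        (Finset.mem_coe.2 (Finset.mem_univ j)) hij),
      Finset.prod_biUnion hpd, Finset.prod_mul_distrib, Finset.prod_pow_eq_pow_sum]

/-- Lemma 4.7, second claim: if `V = V_1 ⊔ ⋯ ⊔ V_k` with complete adjacency
between distinct parts, then `R(G)` is the product of the regions of the induced
subgraphs: `x ∈ R(G)` iff `𝕶_{G,V'}(x) > 0` for every `j` and every `V' ⊆ V_j`. -/
theorem regionR_join (G : SimpleGraph V) (k : ℕ) (Vs : Fin k → Finset V)
    (hne : ∀ j, (Vs j).Nonempty)
    (hdisj : ∀ i j, i ≠ j → Disjoint (Vs i) (Vs j))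
    (hcover : ∀ v : V, ∃ j, v ∈ Vs j)
    (hadj : ∀ i j, i ≠ j → ∀ a ∈ Vs i, ∀ b ∈ Vs j, G.Adj a b)
    (x : V → ℝ) (hx : ∀ v, x v ∈ Set.Icc (0 : ℝ) 1) :
    x ∈ regionR G ↔ ∀ j : Fin k, ∀ V' ⊆ Vs j, 0 < cliquePoly G V' x := by
  constructor
  · intro h j V' _
    exact h.2 V'
  · intro h
    refine ⟨hx, fun V' => ?_⟩
    rw [cliquePoly_prod G k Vs hdisj hcover hadj x V']
    exact Finset.prod_pos fun j _ => h j (V' ∩ Vs j) Finset.inter_subset_right
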